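/- Regard ℂ[x_0, …, x_{n-1}] as the subring of ℂ[x_0, …, x_n] of polynomials not involving x_n. Then: (existence) for every p ∈ ℂ[x_0,…,x_n] there exist q_0, …, q_{k-1} ∈ ℂ[x_0,…,x_{n-1}] such that p − (q_0 + x_n·q_1 + … + x_n^{k-1}·q_{k-1}) ∈ I; and (uniqueness) if q_0, …, q_{k-1} ∈ ℂ[x_0,…,x_{n-1}] satisfy q_0 + x_n·q_1 + … + x_n^{k-1}·q_{k-1} ∈ I, then every q_j belongs to I'. (That is, the homogeneous coordinate ring ℂ[x_0,…,x_n]/I is a free module over ℂ[x_0,…,x_{n-1}]/I' with basis 1, x_n, …, x_n^{k-1}.) -/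

import Mathlib

noncomputable section

/-- The polynomials `P₁, …, P_{n-1}` of the generalized Fermat system of type `(k,n)`:
`P₁ = x₀^k + x₁^k + x₂^k` and `P_{j+1} = λ_j·x₀^k + x₁^k + x_{j+2}^k` for `j = 1, …, n-2`
(0-indexed below). -/
def gfPoly (k n : ℕ) (hn : 3 ≤ n) (lam : Fin (n - 2) → ℂ) :
    Fin (n - 1) → MvPolynomial (Fin (n + 1)) ℂ := fun i =>
  if (i : ℕ) = 0 then
    MvPolynomial.X ⟨0, by omega⟩ ^ k + MvPolynomial.X ⟨1, by omega⟩ ^ k +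
      MvPolynomial.X ⟨2, by omega⟩ ^ k
  else
    MvPolynomial.C (lam ⟨(i : ℕ) - 1, by have := i.2; omega⟩) *
        MvPolynomial.X ⟨0, by omega⟩ ^ k +
      MvPolynomial.X ⟨1, by omega⟩ ^ k +
      MvPolynomial.X ⟨(i : ℕ) + 2, by have := i.2; omega⟩ ^ k

/-- The polynomials `P₁, …, P_{n-2}` of the lower system, as polynomials in `x₀, …, x_{n-1}`. -/
def gfPolyLow (k n : ℕ) (hn : 3 ≤ n) (lam : Fin (n - 2) → ℂ) :
    Fin (n - 2) → MvPolynomial (Fin n) ℂ := fun i =>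
  if (i : ℕ) = 0 then
    MvPolynomial.X ⟨0, by omega⟩ ^ k + MvPolynomial.X ⟨1, by omega⟩ ^ k +
      MvPolynomial.X ⟨2, by omega⟩ ^ k
  else
    MvPolynomial.C (lam ⟨(i : ℕ) - 1, by have := i.2; omega⟩) *
        MvPolynomial.X ⟨0, by omega⟩ ^ k +
      MvPolynomial.X ⟨1, by omega⟩ ^ k +
      MvPolynomial.X ⟨(i : ℕ) + 2, by have := i.2; omega⟩ ^ k

open Polynomial in
lemma gf_poly_core {R : Type*} [CommRing R] (J : Ideal R) (c : R) (k : ℕ) (hk : 1 ≤ k)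
    (q : Fin k → R)
    (h : (∑ j : Fin k, (X : R[X]) ^ (j : ℕ) * C (q j)) ∈
      Ideal.span {(X : R[X]) ^ k + C c} ⊔ Ideal.map (C : R →+* R[X]) J) :
    ∀ j, q j ∈ J := by
  set s : R[X] := ∑ j : Fin k, (X : R[X]) ^ (j : ℕ) * C (q j) with hs
  obtain ⟨u, hu, t, ht, hut⟩ := Submodule.mem_sup.mp h
  obtain ⟨a, ha⟩ := Ideal.mem_span_singleton'.mp hu
  rw [Ideal.mem_map_C_iff] at ht
  have hcoeff : ∀ m : ℕ, s.coeff m = ∑ j : Fin k, if (j : ℕ) = m then q j else 0 := by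
    intro m
    rw [hs, Polynomial.finset_sum_coeff]
    refine Finset.sum_congr rfl fun j _ => ?_
    rw [mul_comm, Polynomial.C_mul_X_pow_eq_monomial, Polynomial.coeff_monomial]
  have hse : ∀ m, s.coeff m =
      (if k ≤ m then a.coeff (m - k) else 0) + a.coeff m * c + t.coeff m := by
    intro m
    rw [← hut, Polynomial.coeff_add, ← ha, mul_add, Polynomial.coeff_add,
      Polynomial.coeff_mul_X_pow', Polynomial.coeff_mul_C]
  have hhigh : ∀ m, k ≤ m → s.coeff m = 0 := by
    intro m hm
    rw [hcoeff]
    refine Finset.sum_eq_zero fun j _ => ?_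
    rw [if_neg]
    exact fun hj => absurd hj (by have := j.2; omega)
  have key : ∀ d m, a.natDegree + 1 ≤ m + d → a.coeff m ∈ J := by
    intro d
    induction d with
    | zero =>
      intro m hm
      rw [Polynomial.coeff_eq_zero_of_natDegree_lt (by omega)]
      exact J.zero_mem
    | succ d ih =>
      intro m hm
      have h0 := hse (m + k)
      rw [hhigh (m + k) (by omega), if_pos (by omega),
        Nat.add_sub_cancel] at h0
      have hmem : a.coeff (m + k) ∈ J := ih (m + k) (by omega)
      have : a.coeff m = -(a.coeff (m + k) * c) - t.coeff (m + k) := by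
        linear_combination -h0
      rw [this]
      exact J.sub_mem (J.neg_mem (J.mul_mem_right c hmem)) (ht (m + k))
  intro j
  have hq : s.coeff (j : ℕ) = q j := by
    rw [hcoeff]
    rw [Finset.sum_eq_single j]
    · simp
    · intro b _ hb
      exact if_neg fun h => hb (Fin.ext h)
    · simp
  have h0 := hse (j : ℕ)
  rw [hq, if_neg (by have := j.2; omega)] at h0
  have : q j = a.coeff j * c + t.coeff j := by rw [h0]; ring
  rw [this]
  exact J.add_mem (J.mul_mem_right c (key (a.natDegree + 1) _ (by omega))) (ht _)

open Polynomial in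
lemma gf_exist_core {R : Type*} [CommRing R] [Nontrivial R] (c : R) (k : ℕ) (hk : 1 ≤ k)
    (f : R[X]) :
    ∃ q : Fin k → R, f - ∑ j : Fin k, (X : R[X]) ^ (j : ℕ) * C (q j) ∈
      Ideal.span {(X : R[X]) ^ k + C c} := by
  have hg : ((X : R[X]) ^ k + C c).Monic := monic_X_pow_add_C c (by omega)
  set g : R[X] := (X : R[X]) ^ k + C c with hgdef
  set r := f %ₘ g with hr
  have hdeg : r.natDegree < k := by
    have h1 : r.degree < g.degree := degree_modByMonic_lt f hg
    have h2 : g.degree = k := degree_X_pow_add_C (by omega) c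
    rcases eq_or_ne r 0 with h | h
    · rw [h, natDegree_zero]; omega
    · rw [h2] at h1
      exact (natDegree_lt_iff_degree_lt h).mpr h1
  refine ⟨fun j => r.coeff j, ?_⟩
  have hrsum : (∑ j : Fin k, (X : R[X]) ^ (j : ℕ) * C (r.coeff j)) = r := by
    have : (∑ j : Fin k, (X : R[X]) ^ (j : ℕ) * C (r.coeff j))
        = ∑ j : Fin k, Polynomial.monomial (j : ℕ) (r.coeff j) := by
      refine Finset.sum_congr rfl fun j _ => ?_
      rw [mul_comm, Polynomial.C_mul_X_pow_eq_monomial]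
    rw [this, Fin.sum_univ_eq_sum_range (fun i => Polynomial.monomial i (r.coeff i)) k,
      ← r.as_sum_range' k hdeg]
  rw [hrsum]
  refine Ideal.mem_span_singleton'.mpr ⟨f /ₘ g, ?_⟩
  have h3 := modByMonic_add_div f g
  linear_combination h3

variable (n : ℕ)

def gfEquiv : MvPolynomial (Fin (n + 1)) ℂ ≃ₐ[ℂ] Polynomial (MvPolynomial (Fin n) ℂ) :=
  (MvPolynomial.renameEquiv ℂ finSuccEquivLast).trans (MvPolynomial.optionEquivLeft ℂ (Fin n))

lemma gfEquiv_X_castSucc (i : Fin n) :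
    gfEquiv n (MvPolynomial.X (Fin.castSucc i)) = Polynomial.C (MvPolynomial.X i) := by
  simp [gfEquiv, MvPolynomial.optionEquivLeft_X_some]

lemma gfEquiv_X_mk (m : ℕ) (hm : m < n) (h2 : m < n + 1) :
    gfEquiv n (MvPolynomial.X ⟨m, h2⟩) = Polynomial.C (MvPolynomial.X ⟨m, hm⟩) := by
  have : (⟨m, h2⟩ : Fin (n + 1)) = Fin.castSucc ⟨m, hm⟩ := rfl
  rw [this, gfEquiv_X_castSucc]

lemma gfEquiv_X_last :
    gfEquiv n (MvPolynomial.X (Fin.last n)) = Polynomial.X := by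
  simp [gfEquiv, MvPolynomial.optionEquivLeft_X_none]

lemma gfEquiv_C (a : ℂ) :
    gfEquiv n (MvPolynomial.C a) = Polynomial.C (MvPolynomial.C a) := by
  simp [gfEquiv, MvPolynomial.optionEquivLeft_C]

lemma gfEquiv_rename (p : MvPolynomial (Fin n) ℂ) :
    gfEquiv n (MvPolynomial.rename Fin.castSucc p) = Polynomial.C p := by
  induction p using MvPolynomial.induction_on with
  | C a => rw [MvPolynomial.rename_C, gfEquiv_C]
  | add p q hp hq => rw [map_add, map_add, hp, hq, map_add]
  | mul_X p i hp =>
    rw [map_mul, map_mul, hp, MvPolynomial.rename_X, gfEquiv_X_castSucc, map_mul]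

theorem generalized_fermat_coordinate_ring_free_module (k n : ℕ) (hk : 2 ≤ k) (hn : 3 ≤ n)
    (lam : Fin (n - 2) → ℂ) (hl0 : ∀ j, lam j ≠ 0) (hl1 : ∀ j, lam j ≠ 1)
    (hinj : Function.Injective lam) :
    (∀ p : MvPolynomial (Fin (n + 1)) ℂ, ∃ q : Fin k → MvPolynomial (Fin n) ℂ,
        p - ∑ j : Fin k,
            MvPolynomial.X (⟨n, by omega⟩ : Fin (n + 1)) ^ (j : ℕ) *
              MvPolynomial.rename Fin.castSucc (q j) ∈
          Ideal.span (Set.range (gfPoly k n hn lam))) ∧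
      ∀ q : Fin k → MvPolynomial (Fin n) ℂ,
        (∑ j : Fin k,
            MvPolynomial.X (⟨n, by omega⟩ : Fin (n + 1)) ^ (j : ℕ) *
              MvPolynomial.rename Fin.castSucc (q j)) ∈
            Ideal.span (Set.range (gfPoly k n hn lam)) →
          ∀ j, q j ∈ Ideal.span (Set.range (gfPolyLow k n hn lam)) := by
  classical
  have hk1 : 1 ≤ k := by omega
  set φ := gfEquiv n with hphi
  set J := Ideal.span (Set.range (gfPolyLow k n hn lam)) with hJ
  set cc : MvPolynomial (Fin n) ℂ :=
    MvPolynomial.C (lam ⟨n - 2 - 1, by omega⟩) * MvPolynomial.X ⟨0, by omega⟩ ^ k +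
      MvPolynomial.X ⟨1, by omega⟩ ^ k with hcc
  set g : Polynomial (MvPolynomial (Fin n) ℂ) := Polynomial.X ^ k + Polynomial.C cc with hg
  have hXl : (MvPolynomial.X (⟨n, by omega⟩ : Fin (n + 1)) : MvPolynomial (Fin (n + 1)) ℂ) =
      MvPolynomial.X (Fin.last n) := rfl
  have hlast : φ (gfPoly k n hn lam ⟨n - 2, by omega⟩) = g := by
    rw [gfPoly]
    rw [if_neg (show ¬ ((⟨n - 2, by omega⟩ : Fin (n - 1)) : ℕ) = 0 by simp; omega)]
    have hX2 : (MvPolynomial.X (⟨((⟨n - 2, by omega⟩ : Fin (n - 1)) : ℕ) + 2, by omega⟩ :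
        Fin (n + 1)) : MvPolynomial (Fin (n + 1)) ℂ) = MvPolynomial.X (Fin.last n) := by
      congr 1
      apply Fin.ext
      simp [Fin.val_last]
      omega
    rw [map_add, map_add, map_mul, map_pow, map_pow, map_pow, hX2, gfEquiv_X_last, gfEquiv_C,
      gfEquiv_X_mk n 0 (by omega), gfEquiv_X_mk n 1 (by omega), hg, hcc,
      Polynomial.C_add, Polynomial.C_mul, Polynomial.C_pow, Polynomial.C_pow]
    ring
  have hlow : ∀ (i : Fin (n - 1)) (hi : (i : ℕ) < n - 2),
      φ (gfPoly k n hn lam i) = Polynomial.C (gfPolyLow k n hn lam ⟨(i : ℕ), hi⟩) := by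
    intro i hi
    rw [gfPoly, gfPolyLow]
    by_cases h0 : (i : ℕ) = 0
    · rw [if_pos h0, if_pos (show ((⟨(i : ℕ), hi⟩ : Fin (n - 2)) : ℕ) = 0 from h0)]
      rw [map_add, map_add, map_pow, map_pow, map_pow,
        gfEquiv_X_mk n 0 (by omega), gfEquiv_X_mk n 1 (by omega), gfEquiv_X_mk n 2 (by omega),
        Polynomial.C_add, Polynomial.C_add, Polynomial.C_pow, Polynomial.C_pow,
        Polynomial.C_pow]
    · rw [if_neg h0, if_neg (show ¬ ((⟨(i : ℕ), hi⟩ : Fin (n - 2)) : ℕ) = 0 from h0)]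
      rw [map_add, map_add, map_mul, map_pow, map_pow, map_pow,
        gfEquiv_X_mk n 0 (by omega), gfEquiv_X_mk n 1 (by omega),
        gfEquiv_X_mk n ((i : ℕ) + 2) (by omega), gfEquiv_C,
        Polynomial.C_add, Polynomial.C_add, Polynomial.C_mul, Polynomial.C_pow,
        Polynomial.C_pow, Polynomial.C_pow]
  have hmap : Ideal.map φ (Ideal.span (Set.range (gfPoly k n hn lam))) =
      Ideal.span {g} ⊔ Ideal.map (Polynomial.C) J := by
    rw [Ideal.map_span, hJ, Ideal.map_span, ← Ideal.span_union]
    apply le_antisymm <;> rw [Ideal.span_le]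
    · rintro _ ⟨_, ⟨i, rfl⟩, rfl⟩
      by_cases hi : (i : ℕ) < n - 2
      · rw [hlow i hi]
        exact Ideal.subset_span (Or.inr ⟨_, ⟨⟨(i : ℕ), hi⟩, rfl⟩, rfl⟩)
      · have hieq : i = ⟨n - 2, by omega⟩ := Fin.ext (by have := i.2; simp; omega)
        rw [hieq, hlast]
        exact Ideal.subset_span (Or.inl rfl)
    · rintro x (rfl | ⟨_, ⟨j, rfl⟩, rfl⟩)
      · exact Ideal.subset_span ⟨_, ⟨⟨n - 2, by omega⟩, rfl⟩, hlast⟩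
      · exact Ideal.subset_span ⟨_, ⟨⟨(j : ℕ), by have := j.2; omega⟩, rfl⟩, hlow _ j.2⟩
  have hmem : ∀ x, x ∈ Ideal.span (Set.range (gfPoly k n hn lam)) ↔
      φ x ∈ Ideal.span {g} ⊔ Ideal.map (Polynomial.C) J := by
    intro x
    rw [← hmap]
    constructor
    · exact fun h => Ideal.mem_map_of_mem φ h
    · intro h
      obtain ⟨y, hy, hyx⟩ := (Ideal.mem_map_iff_of_surjective φ φ.surjective).mp h
      have : y = x := φ.injective hyx
      rwa [← this]
  have hsum : ∀ q : Fin k → MvPolynomial (Fin n) ℂ,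
      φ (∑ j : Fin k, MvPolynomial.X (⟨n, by omega⟩ : Fin (n + 1)) ^ (j : ℕ) *
          MvPolynomial.rename Fin.castSucc (q j)) =
        ∑ j : Fin k, Polynomial.X ^ (j : ℕ) * Polynomial.C (q j) := by
    intro q
    rw [map_sum]
    refine Finset.sum_congr rfl fun j _ => ?_
    rw [map_mul, map_pow, gfEquiv_rename, hXl, gfEquiv_X_last]
  constructor
  · intro p
    obtain ⟨q, hq⟩ := gf_exist_core cc k hk1 (φ p)
    refine ⟨q, ?_⟩
    rw [hmem, map_sub, hsum]
    exact Ideal.mem_sup_left hq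
  · intro q hq j
    have h2 := (hmem _).mp hq
    rw [hsum] at h2
    exact gf_poly_core J cc k hk1 q h2 j
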